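/- Let f, g ∈ h_{1,∞} ∩ 𝔸. Then f + g ∈ 𝔸, σ_g(f+g) = σ_g(f) + σ_g(g), and ‖f+g‖_𝔸 ≤ 2·(‖f+g‖_{1,∞} + ‖f‖_{1,∞} + ‖g‖_{1,∞}) + ‖f‖_𝔸 + ‖g‖_𝔸. -/

import Mathlib

open Filter ENNReal
open scoped Classical

noncomputable section

/-- Coordinate projection onto a finite set of indices. -/
def proj (A : Finset ℕ) (f : ℕ → ℝ) : ℕ → ℝ := fun n => if n ∈ A then f n else 0

/-- Coordinate projection onto a set of indices. -/
def projSet (A : Set ℕ) (f : ℕ → ℝ) : ℕ → ℝ := fun n => if n ∈ A then f n else 0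

/-- `𝟙*_A(f) = ∑_{n ∈ A} f n`. -/
def oneStar (f : ℕ → ℝ) (A : Finset ℕ) : ℝ := ∑ n ∈ A, f n

/-- `A` is a greedy set of `f`. -/
def GreedySet (f : ℕ → ℝ) (A : Finset ℕ) : Prop :=
  ∀ n ∈ A, ∀ k, k ∉ A → |f k| ≤ |f n|

/-- `β(f,A) = sup_{I ∈ ℐ} |𝟙*_{I∖A}(f)| ∈ [0,∞]`, the sup running over all finite
integer intervals `I = [a,b]`. -/
def beta (f : ℕ → ℝ) (A : Finset ℕ) : ℝ≥0∞ :=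
  ⨆ a : ℕ, ⨆ b : ℕ, ENNReal.ofReal |oneStar f (Finset.Icc a b \ A)|

/-- `‖f‖_𝔹 = sup_{A ∈ 𝒢(f)} β(f,A) ∈ [0,∞]`. -/
def BNorm (f : ℕ → ℝ) : ℝ≥0∞ :=
  ⨆ A ∈ {A : Finset ℕ | GreedySet f A}, beta f A

/-- Membership in `𝔹`, i.e. `‖f‖_𝔹 < ∞`. -/
def MemB (f : ℕ → ℝ) : Prop := BNorm f < ⊤

/-- Membership in `c₀`. -/
def Memc0 (f : ℕ → ℝ) : Prop := Tendsto f atTop (nhds 0)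

/-- Membership in `𝔹₀`. -/
def MemB0 (f : ℕ → ℝ) : Prop :=
  Memc0 f ∧ ∀ ε : ℝ, 0 < ε → ∃ A : Finset ℕ, GreedySet f A ∧
    ∀ B : Finset ℕ, GreedySet f B → A ⊆ B → beta f B < ENNReal.ofReal ε

/-- The net `(𝟙*_A(f))_{A ∈ 𝒢(f)}`, directed by inclusion, converges to `s`. -/
def GreedyLim (f : ℕ → ℝ) (s : ℝ) : Prop :=
  ∀ ε : ℝ, 0 < ε → ∃ A : Finset ℕ, GreedySet f A ∧
    ∀ B : Finset ℕ, GreedySet f B → A ⊆ B → |oneStar f B - s| < ε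

/-- Membership in `𝔸`. -/
def MemA (f : ℕ → ℝ) : Prop := Memc0 f ∧ ∃ s, GreedyLim f s

/-- `σ_g(f)`, the greedy sum of `f` (junk value `0` if the greedy net does not converge). -/
def sigmaG (f : ℕ → ℝ) : ℝ := if h : ∃ s, GreedyLim f s then h.choose else 0

/-- `‖f‖_𝔸 = sup_{A ∈ 𝒢(f)} |σ_g(f) - 𝟙*_A(f)|`. -/
def ANorm (f : ℕ → ℝ) : ℝ≥0∞ :=
  ⨆ A ∈ {A : Finset ℕ | GreedySet f A}, ENNReal.ofReal |sigmaG f - oneStar f A|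

/-- The series `∑_n f n` converges (in the ordered sense) to `s`. -/
def SeriesLim (f : ℕ → ℝ) (s : ℝ) : Prop :=
  Tendsto (fun m => ∑ n ∈ Finset.range m, f n) atTop (nhds s)

/-- Membership in `𝒔`: the series `∑_n f n` converges. -/
def MemSeries (f : ℕ → ℝ) : Prop := ∃ s, SeriesLim f s

/-- `σ_s(f) = ∑_{n=0}^∞ f n` (junk value `0` if the series does not converge). -/
def sigmaS (f : ℕ → ℝ) : ℝ := if h : ∃ s, SeriesLim f s then h.choose else 0

/-- `‖f‖_𝒔 = sup_m |∑_{n = m}^∞ f n|`, expressed via `σ_s(f)` minus partial sums. -/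
def sNorm (f : ℕ → ℝ) : ℝ≥0∞ :=
  ⨆ m : ℕ, ENNReal.ofReal |sigmaS f - ∑ n ∈ Finset.range m, f n|

/-- `D(f)(m)`: the `m`-th term (for `m ≥ 1`) of the nonincreasing rearrangement of `|f|`,
as an element of `[0,∞]`. -/
def Drearr (f : ℕ → ℝ) (m : ℕ) : ℝ≥0∞ :=
  sInf {t : ℝ≥0∞ | {n : ℕ | t < ENNReal.ofReal |f n|}.Finite ∧
    {n : ℕ | t < ENNReal.ofReal |f n|}.ncard < m}

/-- `ρ_{1,∞}(f,k) = sup_{m ≥ 1} m · D(f)(m+k) ∈ [0,∞]`. Note `ρ_{1,∞}(f,0) = ‖f‖_{1,∞}`. -/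
def rho (f : ℕ → ℝ) (k : ℕ) : ℝ≥0∞ :=
  ⨆ m : ℕ, ⨆ _ : 1 ≤ m, (m : ℝ≥0∞) * Drearr f (m + k)

/-- Membership in `h_{1,∞}`: `lim_m m · D(f)(m) = 0`. -/
def Memh1inf (f : ℕ → ℝ) : Prop :=
  Tendsto (fun m : ℕ => (m : ℝ≥0∞) * Drearr f m) atTop (nhds 0)

/-- A sequence of nonempty finite integer intervals which is right-dominant:
`max J_k < min J_{k+1}` for all `k`. -/
def RightDominant (J : ℕ → Finset ℕ) : Prop :=
  (∀ k : ℕ, ∃ a b : ℕ, a ≤ b ∧ J k = Finset.Icc a b) ∧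
  ∀ k : ℕ, ∀ n ∈ J k, ∀ m ∈ J (k + 1), n < m

/-- `g` is Leibnizian with admissible sequence `J`. -/
def Admissible (g : ℕ → ℝ) (J : ℕ → Finset ℕ) : Prop :=
  RightDominant J ∧
  (∀ n : ℕ, g n ≠ 0 → ∃ k, n ∈ J k) ∧
  (∀ k : ℕ, oneStar g (J (k + 1)) ≤ oneStar g (J k)) ∧
  (∀ k : ℕ, ∀ n ∈ J k, g n ≠ 0 → ∀ m ∈ J (k + 1), g m < g n)

end

section Aux

open Finset

lemma greedy_empty (f : ℕ → ℝ) : GreedySet f ∅ := by intro n hn; simp at hn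

lemma greedy_union {f : ℕ → ℝ} {A B : Finset ℕ} (hA : GreedySet f A) (hB : GreedySet f B) :
    GreedySet f (A ∪ B) := by
  intro n hn k hk
  simp only [Finset.mem_union] at hn hk
  push_neg at hk
  rcases hn with h | h
  · exact hA n h k hk.1
  · exact hB n h k hk.2

lemma greedyLim_unique {f : ℕ → ℝ} {s s' : ℝ} (h : GreedyLim f s) (h' : GreedyLim f s') :
    s = s' := by
  by_contra hne
  have hpos : 0 < |s - s'| / 2 := by
    have : s - s' ≠ 0 := sub_ne_zero.mpr hne
    positivity
  obtain ⟨A, hA, hAs⟩ := h _ hpos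
  obtain ⟨A', hA', hAs'⟩ := h' _ hpos
  have hU : GreedySet f (A ∪ A') := greedy_union hA hA'
  have h1 := hAs _ hU Finset.subset_union_left
  have h2 := hAs' _ hU Finset.subset_union_right
  have h3 : |s - s'| ≤ |s - oneStar f (A ∪ A')| + |oneStar f (A ∪ A') - s'| := abs_sub_le _ _ _
  rw [abs_sub_comm s (oneStar f (A ∪ A'))] at h3
  have h4 : |s' - s| = |s - s'| := abs_sub_comm s' s
  linarith

lemma sigmaG_spec {f : ℕ → ℝ} (h : ∃ s, GreedyLim f s) : GreedyLim f (sigmaG f) := by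
  rw [sigmaG, dif_pos h]; exact h.choose_spec

lemma exists_ge_abs (f : ℕ → ℝ) (hf : Memc0 f) (A : Finset ℕ) :
    ∃ n, n ∉ A ∧ ∀ k, k ∉ A → |f k| ≤ |f n| := by
  by_cases hz : ∃ n₁, n₁ ∉ A ∧ f n₁ ≠ 0
  · obtain ⟨n₁, hn₁A, hn₁⟩ := hz
    have hv : 0 < |f n₁| := abs_pos.mpr hn₁
    have hev : ∀ᶠ k in Filter.atTop, |f k| < |f n₁| := by
      have := hf.eventually (eventually_abs_sub_lt 0 hv)
      simpa using this
    obtain ⟨a, ha⟩ := Filter.eventually_atTop.mp hev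
    set T : Finset ℕ := (Finset.range a).filter (fun k => k ∉ A) ∪ {n₁} with hT
    have hTne : T.Nonempty := ⟨n₁, by simp [hT]⟩
    obtain ⟨n, hnT, hn⟩ := T.exists_max_image (fun k => |f k|) hTne
    refine ⟨n, ?_, ?_⟩
    · rcases Finset.mem_union.mp hnT with h | h
      · exact (Finset.mem_filter.mp h).2
      · simpa using Finset.mem_singleton.mp h ▸ hn₁A
    · intro k hk
      by_cases hka : k < a
      · have : k ∈ T := Finset.mem_union_left _ (Finset.mem_filter.mpr ⟨Finset.mem_range.mpr hka, hk⟩)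
        exact hn k this
      · have h1 : |f k| < |f n₁| := ha k (le_of_not_gt hka)
        have h2 : |f n₁| ≤ |f n| := hn n₁ (Finset.mem_union_right _ (Finset.mem_singleton_self n₁))
        linarith
  · push_neg at hz
    obtain ⟨n, hn⟩ := A.exists_notMem
    refine ⟨n, hn, fun k hk => ?_⟩
    rw [hz k hk, hz n hn]

lemma exists_greedy_ext (f : ℕ → ℝ) (hf : Memc0 f) {A : Finset ℕ} (hA : GreedySet f A)
    {N : ℕ} (hN : A.card ≤ N) : ∃ G, GreedySet f G ∧ A ⊆ G ∧ G.card = N := by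
  induction N with
  | zero =>
    have : A = ∅ := Finset.card_eq_zero.mp (Nat.le_zero.mp hN)
    exact ⟨∅, greedy_empty f, by simp [this], rfl⟩
  | succ N ih =>
    rcases Nat.lt_or_ge A.card (N + 1) with h | h
    · obtain ⟨G, hG, hAG, hGc⟩ := ih (Nat.lt_succ_iff.mp h)
      obtain ⟨n, hnG, hn⟩ := exists_ge_abs f hf G
      refine ⟨insert n G, ?_, hAG.trans (Finset.subset_insert n G), ?_⟩
      · intro m hm k hk
        have hkG : k ∉ G := fun hkG => hk (Finset.mem_insert_of_mem hkG)
        rcases Finset.mem_insert.mp hm with rfl | hm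
        · exact hn k hkG
        · exact hG m hm k hkG
      · rw [Finset.card_insert_of_notMem hnG, hGc]
    · have : A.card = N + 1 := le_antisymm hN h
      exact ⟨A, hA, subset_refl A, this⟩

lemma drearr_lb {f : ℕ → ℝ} {S G : Finset ℕ} (hd : Disjoint S G)
    (hdom : ∀ n ∈ S, ∀ m ∈ G, |f n| ≤ |f m|) {n₀ : ℕ} (hn₀ : n₀ ∈ S)
    (hmin : ∀ n ∈ S, |f n₀| ≤ |f n|) :
    ENNReal.ofReal |f n₀| ≤ Drearr f (G.card + S.card) := by
  rw [Drearr]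
  refine le_sInf fun t ht => ?_
  by_contra hlt
  push_neg at hlt
  obtain ⟨hfin, hcard⟩ := ht
  have hsub : ↑(S ∪ G) ⊆ {n : ℕ | t < ENNReal.ofReal |f n|} := by
    intro n hn
    simp only [Finset.coe_union, Set.mem_union, Finset.mem_coe] at hn
    have hle : |f n₀| ≤ |f n| := by
      rcases hn with h | h
      · exact hmin n h
      · exact hdom n₀ hn₀ n h
    exact lt_of_lt_of_le hlt (ENNReal.ofReal_le_ofReal hle)
  have h1 : (S ∪ G).card ≤ {n : ℕ | t < ENNReal.ofReal |f n|}.ncard := by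
    rw [← Set.ncard_coe_finset]
    exact Set.ncard_le_ncard hsub hfin
  have h2 : (S ∪ G).card = S.card + G.card := Finset.card_union_of_disjoint hd
  omega

lemma sum_abs_le_drearr {f : ℕ → ℝ} {G : Finset ℕ}
    (hdomG : ∀ m ∈ G, ∀ k, k ∉ G → |f k| ≤ |f m|) (S : Finset ℕ) (hd : Disjoint S G) :
    ∑ n ∈ S, ENNReal.ofReal |f n| ≤ ∑ j ∈ Finset.range S.card, Drearr f (G.card + 1 + j) := by
  induction S using Finset.strongInduction with
  | _ S ih =>
    rcases S.eq_empty_or_nonempty with rfl | hne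
    · simp
    obtain ⟨n₀, hn₀, hmin⟩ := S.exists_min_image (fun n => |f n|) hne
    have hcard : S.card = (S.erase n₀).card + 1 := by
      rw [Finset.card_erase_of_mem hn₀]
      have := Finset.card_pos.mpr hne
      omega
    have hd' : Disjoint (S.erase n₀) G := Finset.disjoint_of_subset_left (Finset.erase_subset n₀ S) hd
    have ihe := ih (S.erase n₀) (Finset.erase_ssubset hn₀) hd'
    have hlast : ENNReal.ofReal |f n₀| ≤ Drearr f (G.card + 1 + (S.erase n₀).card) := by
      have : G.card + 1 + (S.erase n₀).card = G.card + S.card := by omega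
      rw [this]
      refine drearr_lb hd (fun n hn m hm => ?_) hn₀ hmin
      have hnG : n ∉ G := Finset.disjoint_left.mp hd hn
      exact hdomG m hm n hnG
    calc ∑ n ∈ S, ENNReal.ofReal |f n|
        = ∑ n ∈ S.erase n₀, ENNReal.ofReal |f n| + ENNReal.ofReal |f n₀| :=
          (Finset.sum_erase_add S _ hn₀).symm
      _ ≤ ∑ j ∈ Finset.range (S.erase n₀).card, Drearr f (G.card + 1 + j)
            + Drearr f (G.card + 1 + (S.erase n₀).card) := add_le_add ihe hlast
      _ = ∑ j ∈ Finset.range ((S.erase n₀).card + 1), Drearr f (G.card + 1 + j) :=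
          (Finset.sum_range_succ _ _).symm
      _ = ∑ j ∈ Finset.range S.card, Drearr f (G.card + 1 + j) := by rw [← hcard]

lemma tsum_le_of_bound {f : ℕ → ℝ} {S G : Finset ℕ} (hd : Disjoint S G)
    (hdomG : ∀ m ∈ G, ∀ k, k ∉ G → |f k| ≤ |f m|) {C : ℝ≥0∞}
    (hD : ∀ m : ℕ, G.card + 1 ≤ m → Drearr f m ≤ C / (m : ℝ≥0∞)) {c : ℕ}
    (hcard : S.card ≤ c * G.card) :
    ∑ n ∈ S, ENNReal.ofReal |f n| ≤ (c : ℝ≥0∞) * C := by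
  have hstep : ∀ j : ℕ, Drearr f (G.card + 1 + j) ≤ C / ((G.card : ℝ≥0∞) + 1) := by
    intro j
    refine (hD (G.card + 1 + j) (by omega)).trans ?_
    refine ENNReal.div_le_div_left ?_ C
    push_cast
    exact le_add_of_nonneg_right (by positivity)
  calc ∑ n ∈ S, ENNReal.ofReal |f n|
      ≤ ∑ j ∈ Finset.range S.card, Drearr f (G.card + 1 + j) := sum_abs_le_drearr hdomG S hd
    _ ≤ ∑ _j ∈ Finset.range S.card, C / ((G.card : ℝ≥0∞) + 1) :=
        Finset.sum_le_sum fun j _ => hstep j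
    _ = (S.card : ℝ≥0∞) * (C / ((G.card : ℝ≥0∞) + 1)) := by
        rw [Finset.sum_const, Finset.card_range, nsmul_eq_mul]
    _ ≤ ((c * (G.card + 1) : ℕ) : ℝ≥0∞) * (C / ((G.card : ℝ≥0∞) + 1)) := by
        refine mul_le_mul_left ?_ _
        exact_mod_cast hcard.trans (Nat.mul_le_mul_left c (Nat.le_succ _))
    _ = (c : ℝ≥0∞) * (((G.card : ℝ≥0∞) + 1) * (C / ((G.card : ℝ≥0∞) + 1))) := by
        push_cast; ring
    _ ≤ (c : ℝ≥0∞) * C := mul_le_mul_right ENNReal.mul_div_le _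

lemma rho_bound (f : ℕ → ℝ) (m : ℕ) (hm : 1 ≤ m) :
    Drearr f m ≤ rho f 0 / (m : ℝ≥0∞) := by
  have h : (m : ℝ≥0∞) * Drearr f (m + 0) ≤ rho f 0 := by
    rw [rho]
    exact le_iSup₂ (f := fun (m : ℕ) (_ : 1 ≤ m) => (m : ℝ≥0∞) * Drearr f (m + 0)) m hm
  rw [Nat.add_zero] at h
  rw [ENNReal.le_div_iff_mul_le (Or.inl (Nat.cast_ne_zero.mpr (by omega))) (Or.inl (ENNReal.natCast_ne_top m))]
  rwa [mul_comm]

lemma tail_small {f : ℕ → ℝ} (hf : Memh1inf f) {ε : ℝ} (hε : 0 < ε) :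
    ∃ N₀ : ℕ, ∀ m : ℕ, N₀ + 1 ≤ m → Drearr f m ≤ ENNReal.ofReal ε / (m : ℝ≥0∞) := by
  have h0 : (0 : ℝ≥0∞) < ENNReal.ofReal ε := ENNReal.ofReal_pos.mpr hε
  have hev : ∀ᶠ (m : ℕ) in Filter.atTop, (m : ℝ≥0∞) * Drearr f m < ENNReal.ofReal ε :=
    hf.eventually_lt_const h0
  obtain ⟨N₀, hN⟩ := Filter.eventually_atTop.mp hev
  refine ⟨N₀, fun m hm => ?_⟩
  have h := (hN m (by omega)).le
  rw [ENNReal.le_div_iff_mul_le (Or.inl (Nat.cast_ne_zero.mpr (by omega))) (Or.inl (ENNReal.natCast_ne_top m))]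
  rwa [mul_comm]

lemma key_identity (f g : ℕ → ℝ) (B G G' : Finset ℕ) :
    oneStar f G + oneStar g G' - oneStar (f + g) B =
      oneStar (f + g) ((G ∪ G') \ B) - oneStar g ((G \ G') \ B)
        - oneStar f ((G' \ G) \ B) - oneStar f (B \ G) - oneStar g (B \ G') := by
  classical
  set U := B ∪ G ∪ G' with hU
  have expand : ∀ (φ : ℕ → ℝ) (A : Finset ℕ), A ⊆ U →
      oneStar φ A = ∑ n ∈ U, if n ∈ A then φ n else 0 := by
    intro φ A hA
    rw [oneStar, Finset.sum_ite_mem, Finset.inter_eq_right.mpr hA]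
  have hBU : B ⊆ U := by intro n hn; simp [hU, hn]
  have hGU : G ⊆ U := by intro n hn; simp [hU, hn]
  have hG'U : G' ⊆ U := by intro n hn; simp [hU, hn]
  rw [expand f G hGU, expand g G' hG'U, expand (f + g) B hBU,
    expand (f + g) _ ((Finset.sdiff_subset).trans (Finset.union_subset hGU hG'U)),
    expand g ((G \ G') \ B) ((Finset.sdiff_subset).trans ((Finset.sdiff_subset).trans hGU)),
    expand f ((G' \ G) \ B) ((Finset.sdiff_subset).trans ((Finset.sdiff_subset).trans hG'U)),
    expand f (B \ G) ((Finset.sdiff_subset).trans hBU),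
    expand g (B \ G') ((Finset.sdiff_subset).trans hBU)]
  simp only [← Finset.sum_sub_distrib, ← Finset.sum_add_distrib]
  refine Finset.sum_congr rfl fun n _ => ?_
  by_cases hB : n ∈ B <;> by_cases hG : n ∈ G <;> by_cases hG' : n ∈ G' <;>
    simp [hB, hG, hG', Pi.add_apply] <;> ring

lemma ofReal_oneStar_le (φ : ℕ → ℝ) (S : Finset ℕ) :
    ENNReal.ofReal |oneStar φ S| ≤ ∑ n ∈ S, ENNReal.ofReal |φ n| := by
  refine le_trans (ENNReal.ofReal_le_ofReal (Finset.abs_sum_le_sum_abs _ _)) ?_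
  rw [ENNReal.ofReal_sum_of_nonneg (fun i _ => abs_nonneg _)]

lemma main_est (f g : ℕ → ℝ) (sf sg : ℝ) (B G G' : Finset ℕ) :
    ENNReal.ofReal |sf + sg - oneStar (f + g) B| ≤
      ENNReal.ofReal |sf - oneStar f G| + ENNReal.ofReal |sg - oneStar g G'|
      + (∑ n ∈ (G ∪ G') \ B, ENNReal.ofReal |(f + g) n|)
      + (∑ n ∈ (G \ G') \ B, ENNReal.ofReal |g n|)
      + (∑ n ∈ (G' \ G) \ B, ENNReal.ofReal |f n|)
      + (∑ n ∈ B \ G, ENNReal.ofReal |f n|)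
      + (∑ n ∈ B \ G', ENNReal.ofReal |g n|) := by
  have e1 : sf + sg - oneStar (f + g) B =
      (sf - oneStar f G) + (sg - oneStar g G')
        + (oneStar f G + oneStar g G' - oneStar (f + g) B) := by ring
  rw [e1, key_identity f g B G G']
  refine le_trans (ENNReal.ofReal_le_ofReal (abs_add_le _ _)) ?_
  refine le_trans ENNReal.ofReal_add_le ?_
  have h2 : ENNReal.ofReal |(sf - oneStar f G) + (sg - oneStar g G')| ≤
      ENNReal.ofReal |sf - oneStar f G| + ENNReal.ofReal |sg - oneStar g G'| :=
    le_trans (ENNReal.ofReal_le_ofReal (abs_add_le _ _)) ENNReal.ofReal_add_le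
  have h3 : ENNReal.ofReal |oneStar (f + g) ((G ∪ G') \ B) - oneStar g ((G \ G') \ B)
      - oneStar f ((G' \ G) \ B) - oneStar f (B \ G) - oneStar g (B \ G')| ≤
      (∑ n ∈ (G ∪ G') \ B, ENNReal.ofReal |(f + g) n|)
      + (∑ n ∈ (G \ G') \ B, ENNReal.ofReal |g n|)
      + (∑ n ∈ (G' \ G) \ B, ENNReal.ofReal |f n|)
      + (∑ n ∈ B \ G, ENNReal.ofReal |f n|)
      + (∑ n ∈ B \ G', ENNReal.ofReal |g n|) := by
    refine le_trans (ENNReal.ofReal_le_ofReal (abs_sub _ _)) ?_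
    refine le_trans ENNReal.ofReal_add_le (add_le_add ?_ (ofReal_oneStar_le _ _))
    refine le_trans (ENNReal.ofReal_le_ofReal (abs_sub _ _)) ?_
    refine le_trans ENNReal.ofReal_add_le (add_le_add ?_ (ofReal_oneStar_le _ _))
    refine le_trans (ENNReal.ofReal_le_ofReal (abs_sub _ _)) ?_
    refine le_trans ENNReal.ofReal_add_le (add_le_add ?_ (ofReal_oneStar_le _ _))
    refine le_trans (ENNReal.ofReal_le_ofReal (abs_sub _ _)) ?_
    exact le_trans ENNReal.ofReal_add_le
      (add_le_add (ofReal_oneStar_le _ _) (ofReal_oneStar_le _ _))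
  calc ENNReal.ofReal |(sf - oneStar f G) + (sg - oneStar g G')|
        + ENNReal.ofReal |oneStar (f + g) ((G ∪ G') \ B) - oneStar g ((G \ G') \ B)
          - oneStar f ((G' \ G) \ B) - oneStar f (B \ G) - oneStar g (B \ G')|
      ≤ (ENNReal.ofReal |sf - oneStar f G| + ENNReal.ofReal |sg - oneStar g G'|)
        + ((∑ n ∈ (G ∪ G') \ B, ENNReal.ofReal |(f + g) n|)
          + (∑ n ∈ (G \ G') \ B, ENNReal.ofReal |g n|)
          + (∑ n ∈ (G' \ G) \ B, ENNReal.ofReal |f n|)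
          + (∑ n ∈ B \ G, ENNReal.ofReal |f n|)
          + (∑ n ∈ B \ G', ENNReal.ofReal |g n|)) := add_le_add h2 h3
    _ = _ := by ring

lemma drearr_anti (f : ℕ → ℝ) {m m' : ℕ} (h : m ≤ m') : Drearr f m' ≤ Drearr f m :=
  sInf_le_sInf (fun t ht => ⟨ht.1, lt_of_lt_of_le ht.2 (by omega)⟩)

lemma drearr_add (f g : ℕ → ℝ) (k : ℕ) :
    Drearr (f + g) (2 * k) ≤ Drearr f k + Drearr g k := by
  rcases eq_or_ne (Drearr f k) ⊤ with hf | hf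
  · rw [hf, top_add]; exact le_top
  rcases eq_or_ne (Drearr g k) ⊤ with hg | hg
  · rw [hg, add_top]; exact le_top
  have hk : 1 ≤ k := by
    by_contra hk
    have : k = 0 := by omega
    subst this
    apply hf
    rw [Drearr, show {t : ℝ≥0∞ | {n : ℕ | t < ENNReal.ofReal |f n|}.Finite ∧
      {n : ℕ | t < ENNReal.ofReal |f n|}.ncard < 0} = ∅ by
        ext t; simp, sInf_empty]
  refine ENNReal.le_of_forall_pos_le_add fun ε hε hlt => ?_
  have hε2 : (0 : ℝ≥0∞) < (ε : ℝ≥0∞) / 2 := ENNReal.div_pos (by exact_mod_cast hε.ne') (by norm_num)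
  have h1 : Drearr f k < Drearr f k + ε / 2 :=
    ENNReal.lt_add_right hf hε2.ne'
  have h2 : Drearr g k < Drearr g k + ε / 2 :=
    ENNReal.lt_add_right hg hε2.ne'
  rw [Drearr] at h1 h2
  obtain ⟨t, ht, hts⟩ := sInf_lt_iff.mp h1
  obtain ⟨s, hs, hss⟩ := sInf_lt_iff.mp h2
  obtain ⟨htfin, htcard⟩ := ht
  obtain ⟨hsfin, hscard⟩ := hs
  have hsub : {n : ℕ | t + s < ENNReal.ofReal |(f + g) n|} ⊆
      {n : ℕ | t < ENNReal.ofReal |f n|} ∪ {n : ℕ | s < ENNReal.ofReal |g n|} := by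
    intro n hn
    simp only [Set.mem_setOf_eq, Set.mem_union] at hn ⊢
    by_contra hcon
    push_neg at hcon
    obtain ⟨h1', h2'⟩ := hcon
    have : ENNReal.ofReal |(f + g) n| ≤ t + s := by
      calc ENNReal.ofReal |(f + g) n| ≤ ENNReal.ofReal (|f n| + |g n|) :=
            ENNReal.ofReal_le_ofReal (abs_add_le _ _)
        _ ≤ ENNReal.ofReal |f n| + ENNReal.ofReal |g n| := ENNReal.ofReal_add_le
        _ ≤ t + s := add_le_add h1' h2'
    exact absurd hn (not_lt.mpr this)
  have hmem : t + s ∈ {u : ℝ≥0∞ | {n : ℕ | u < ENNReal.ofReal |(f + g) n|}.Finite ∧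
      {n : ℕ | u < ENNReal.ofReal |(f + g) n|}.ncard < 2 * k} := by
    constructor
    · exact (htfin.union hsfin).subset hsub
    · calc {n : ℕ | t + s < ENNReal.ofReal |(f + g) n|}.ncard
          ≤ ({n : ℕ | t < ENNReal.ofReal |f n|} ∪ {n : ℕ | s < ENNReal.ofReal |g n|}).ncard :=
            Set.ncard_le_ncard hsub (htfin.union hsfin)
        _ ≤ {n : ℕ | t < ENNReal.ofReal |f n|}.ncard + {n : ℕ | s < ENNReal.ofReal |g n|}.ncard :=
            Set.ncard_union_le _ _
        _ < 2 * k := by omega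
  calc Drearr (f + g) (2 * k) ≤ t + s := sInf_le hmem
    _ ≤ (Drearr f k + ε / 2) + (Drearr g k + ε / 2) := add_le_add hts.le hss.le
    _ = Drearr f k + Drearr g k + (ε / 2 + ε / 2) := by ring
    _ = Drearr f k + Drearr g k + ε := by rw [ENNReal.add_halves]

lemma memh1inf_add {f g : ℕ → ℝ} (hf : Memh1inf f) (hg : Memh1inf g) :
    Memh1inf (f + g) := by
  rw [Memh1inf, ENNReal.tendsto_atTop_zero]
  intro ε hε
  have hε8 : (0 : ℝ≥0∞) < ε / 8 := ENNReal.div_pos hε.ne' (by norm_num)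
  obtain ⟨M₁, hM₁⟩ := ENNReal.tendsto_atTop_zero.mp hf (ε / 8) hε8
  obtain ⟨M₂, hM₂⟩ := ENNReal.tendsto_atTop_zero.mp hg (ε / 8) hε8
  refine ⟨2 * (max M₁ M₂) + 2, fun m hm => ?_⟩
  set k := m / 2 with hk
  have hk1 : M₁ ≤ k ∧ M₂ ≤ k ∧ 2 * k ≤ m ∧ m ≤ 3 * k := by
    constructor
    · omega
    constructor
    · omega
    constructor
    · omega
    · omega
  have hDf : (k : ℝ≥0∞) * Drearr f k ≤ ε / 8 := hM₁ k hk1.1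
  have hDg : (k : ℝ≥0∞) * Drearr g k ≤ ε / 8 := hM₂ k hk1.2.1
  have hmono : Drearr (f + g) m ≤ Drearr f k + Drearr g k :=
    (drearr_anti (f + g) hk1.2.2.1).trans (drearr_add f g k)
  have hcast : (m : ℝ≥0∞) ≤ 3 * (k : ℝ≥0∞) := by exact_mod_cast hk1.2.2.2
  calc (m : ℝ≥0∞) * Drearr (f + g) m
      ≤ (3 * (k : ℝ≥0∞)) * (Drearr f k + Drearr g k) :=
        mul_le_mul' hcast hmono
    _ = 3 * ((k : ℝ≥0∞) * Drearr f k) + 3 * ((k : ℝ≥0∞) * Drearr g k) := by ring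
    _ ≤ 3 * (ε / 8) + 3 * (ε / 8) := by
        exact add_le_add (mul_le_mul_right hDf 3) (mul_le_mul_right hDg 3)
    _ = 6 * (ε / 8) := by ring
    _ ≤ 8 * (ε / 8) := mul_le_mul_left (by norm_num) _
    _ = ε := ENNReal.mul_div_cancel (by norm_num) (by norm_num)

end Aux







/-- if `f, g ∈ h_{1,∞} ∩ 𝔸`, then `f + g ∈ 𝔸`,
`σ_g(f+g) = σ_g(f) + σ_g(g)`, and
`‖f+g‖_𝔸 ≤ 2·(‖f+g‖_{1,∞} + ‖f‖_{1,∞} + ‖g‖_{1,∞}) + ‖f‖_𝔸 + ‖g‖_𝔸`. -/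
theorem stmt_19 (f g : ℕ → ℝ) (hf : Memh1inf f ∧ MemA f) (hg : Memh1inf g ∧ MemA g) :
    MemA (f + g) ∧ sigmaG (f + g) = sigmaG f + sigmaG g ∧
    ANorm (f + g) ≤ 2 * (rho (f + g) 0 + rho f 0 + rho g 0) + ANorm f + ANorm g := by
  obtain ⟨hh1f, hc0f, hexf⟩ := hf
  obtain ⟨hh1g, hc0g, hexg⟩ := hg
  have hglf : GreedyLim f (sigmaG f) := sigmaG_spec hexf
  have hglg : GreedyLim g (sigmaG g) := sigmaG_spec hexg
  set sf := sigmaG f with hsf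
  set sg := sigmaG g with hsg
  have hc0h : Memc0 (f + g) := by
    have := hc0f.add hc0g
    rw [add_zero] at this; exact this
  have hh1h : Memh1inf (f + g) := memh1inf_add hh1f hh1g
  -- main convergence claim
  have hGL : GreedyLim (f + g) (sf + sg) := by
    intro ε hε
    have hε14 : 0 < ε / 14 := by positivity
    have hε28 : 0 < ε / 28 := by positivity
    obtain ⟨Af, hAf, hAf2⟩ := hglf _ hε14
    obtain ⟨Ag, hAg, hAg2⟩ := hglg _ hε14
    obtain ⟨N₁, hN₁⟩ := tail_small hh1f hε28
    obtain ⟨N₂, hN₂⟩ := tail_small hh1g hε28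
    obtain ⟨N₃, hN₃⟩ := tail_small hh1h hε28
    set M := max (max Af.card Ag.card) (max N₁ (max N₂ N₃)) with hM
    obtain ⟨A, hA, -, hAcard⟩ := exists_greedy_ext (f + g) hc0h (greedy_empty (f + g))
      (N := M) (Nat.zero_le M)
    refine ⟨A, hA, fun B hB hAB => ?_⟩
    have hNM : M ≤ B.card := hAcard ▸ Finset.card_le_card hAB
    set N := B.card with hN
    obtain ⟨G, hG, hAfG, hGcard⟩ := exists_greedy_ext f hc0f hAf
      (N := N) (by omega)
    obtain ⟨G', hG', hAgG', hG'card⟩ := exists_greedy_ext g hc0g hAg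
      (N := N) (by omega)
    set x := ENNReal.ofReal (ε / 14) with hx
    have h2x : ((2 : ℕ) : ℝ≥0∞) * ENNReal.ofReal (ε / 28) = x := by
      rw [hx, show (ε / 14) = 2 * (ε / 28) by ring, ENNReal.ofReal_mul (by norm_num)]
      norm_num
    have t1 : ENNReal.ofReal |sf - oneStar f G| ≤ x := by
      rw [abs_sub_comm]
      exact ENNReal.ofReal_le_ofReal (hAf2 G hG hAfG).le
    have t2 : ENNReal.ofReal |sg - oneStar g G'| ≤ x := by
      rw [abs_sub_comm]
      exact ENNReal.ofReal_le_ofReal (hAg2 G' hG' hAgG').le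
    have t3 : ∑ n ∈ (G ∪ G') \ B, ENNReal.ofReal |(f + g) n| ≤ x := by
      rw [← h2x]
      refine tsum_le_of_bound Finset.sdiff_disjoint hB
        (fun m hm => hN₃ m (by omega)) ?_
      calc ((G ∪ G') \ B).card ≤ (G ∪ G').card := Finset.card_le_card Finset.sdiff_subset
        _ ≤ G.card + G'.card := Finset.card_union_le _ _
        _ ≤ 2 * B.card := by omega
    have t4 : ∑ n ∈ (G \ G') \ B, ENNReal.ofReal |g n| ≤ x := by
      rw [← h2x]
      refine tsum_le_of_bound
        (Finset.disjoint_of_subset_left Finset.sdiff_subset Finset.sdiff_disjoint) hG'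
        (fun m hm => hN₂ m (by omega)) ?_
      calc ((G \ G') \ B).card ≤ G.card := Finset.card_le_card
            (Finset.sdiff_subset.trans Finset.sdiff_subset)
        _ ≤ 2 * G'.card := by omega
    have t5 : ∑ n ∈ (G' \ G) \ B, ENNReal.ofReal |f n| ≤ x := by
      rw [← h2x]
      refine tsum_le_of_bound
        (Finset.disjoint_of_subset_left Finset.sdiff_subset Finset.sdiff_disjoint) hG
        (fun m hm => hN₁ m (by omega)) ?_
      calc ((G' \ G) \ B).card ≤ G'.card := Finset.card_le_card
            (Finset.sdiff_subset.trans Finset.sdiff_subset)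
        _ ≤ 2 * G.card := by omega
    have t6 : ∑ n ∈ B \ G, ENNReal.ofReal |f n| ≤ x := by
      rw [← h2x]
      refine tsum_le_of_bound Finset.sdiff_disjoint hG
        (fun m hm => hN₁ m (by omega)) ?_
      calc (B \ G).card ≤ B.card := Finset.card_le_card Finset.sdiff_subset
        _ ≤ 2 * G.card := by omega
    have t7 : ∑ n ∈ B \ G', ENNReal.ofReal |g n| ≤ x := by
      rw [← h2x]
      refine tsum_le_of_bound Finset.sdiff_disjoint hG'
        (fun m hm => hN₂ m (by omega)) ?_
      calc (B \ G').card ≤ B.card := Finset.card_le_card Finset.sdiff_subset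
        _ ≤ 2 * G'.card := by omega
    have hmain := (main_est f g sf sg B G G').trans
      (add_le_add (add_le_add (add_le_add (add_le_add (add_le_add (add_le_add t1 t2) t3) t4) t5) t6) t7)
    have hxsum : x + x + x + x + x + x + x = ENNReal.ofReal (ε / 2) := by
      rw [hx, show (ε / 2) = ε / 14 + ε / 14 + ε / 14 + ε / 14 + ε / 14 + ε / 14 + ε / 14 by ring]
      rw [ENNReal.ofReal_add (by positivity) (by positivity),
        ENNReal.ofReal_add (by positivity) (by positivity),
        ENNReal.ofReal_add (by positivity) (by positivity),
        ENNReal.ofReal_add (by positivity) (by positivity),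
        ENNReal.ofReal_add (by positivity) (by positivity),
        ENNReal.ofReal_add (by positivity) (by positivity)]
    rw [hxsum] at hmain
    have hreal : |sf + sg - oneStar (f + g) B| ≤ ε / 2 :=
      (ENNReal.ofReal_le_ofReal_iff (by positivity)).mp hmain
    rw [abs_sub_comm] at hreal
    linarith
  have hMemA : MemA (f + g) := ⟨hc0h, sf + sg, hGL⟩
  have hsigma : sigmaG (f + g) = sf + sg :=
    greedyLim_unique (sigmaG_spec ⟨sf + sg, hGL⟩) hGL
  refine ⟨hMemA, hsigma, ?_⟩
  -- the norm inequality
  rw [ANorm]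
  refine iSup₂_le fun B hB => ?_
  simp only [Set.mem_setOf_eq] at hB
  obtain ⟨G, hG, -, hGcard⟩ := exists_greedy_ext f hc0f (greedy_empty f)
    (N := B.card) (Nat.zero_le _)
  obtain ⟨G', hG', -, hG'card⟩ := exists_greedy_ext g hc0g (greedy_empty g)
    (N := B.card) (Nat.zero_le _)
  rw [hsigma]
  have t1 : ENNReal.ofReal |sf - oneStar f G| ≤ ANorm f := by
    rw [ANorm, ← hsf]
    exact le_iSup₂ (f := fun (A : Finset ℕ) (_ : A ∈ {A : Finset ℕ | GreedySet f A}) =>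
      ENNReal.ofReal |sf - oneStar f A|) G hG
  have t2 : ENNReal.ofReal |sg - oneStar g G'| ≤ ANorm g := by
    rw [ANorm, ← hsg]
    exact le_iSup₂ (f := fun (A : Finset ℕ) (_ : A ∈ {A : Finset ℕ | GreedySet g A}) =>
      ENNReal.ofReal |sg - oneStar g A|) G' hG'
  have t3 : ∑ n ∈ (G ∪ G') \ B, ENNReal.ofReal |(f + g) n| ≤ ((2:ℕ) : ℝ≥0∞) * rho (f + g) 0 := by
    refine tsum_le_of_bound Finset.sdiff_disjoint hB (fun m hm => rho_bound _ m (by omega)) ?_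
    calc ((G ∪ G') \ B).card ≤ (G ∪ G').card := Finset.card_le_card Finset.sdiff_subset
      _ ≤ G.card + G'.card := Finset.card_union_le _ _
      _ ≤ 2 * B.card := by omega
  have t4 : ∑ n ∈ (G \ G') \ B, ENNReal.ofReal |g n| ≤ ((1:ℕ) : ℝ≥0∞) * rho g 0 := by
    refine tsum_le_of_bound
      (Finset.disjoint_of_subset_left Finset.sdiff_subset Finset.sdiff_disjoint) hG'
      (fun m hm => rho_bound _ m (by omega)) ?_
    calc ((G \ G') \ B).card ≤ G.card := Finset.card_le_card
          (Finset.sdiff_subset.trans Finset.sdiff_subset)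
      _ ≤ 1 * G'.card := by omega
  have t5 : ∑ n ∈ (G' \ G) \ B, ENNReal.ofReal |f n| ≤ ((1:ℕ) : ℝ≥0∞) * rho f 0 := by
    refine tsum_le_of_bound
      (Finset.disjoint_of_subset_left Finset.sdiff_subset Finset.sdiff_disjoint) hG
      (fun m hm => rho_bound _ m (by omega)) ?_
    calc ((G' \ G) \ B).card ≤ G'.card := Finset.card_le_card
          (Finset.sdiff_subset.trans Finset.sdiff_subset)
      _ ≤ 1 * G.card := by omega
  have t6 : ∑ n ∈ B \ G, ENNReal.ofReal |f n| ≤ ((1:ℕ) : ℝ≥0∞) * rho f 0 := by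
    refine tsum_le_of_bound Finset.sdiff_disjoint hG
      (fun m hm => rho_bound _ m (by omega)) ?_
    calc (B \ G).card ≤ B.card := Finset.card_le_card Finset.sdiff_subset
      _ ≤ 1 * G.card := by omega
  have t7 : ∑ n ∈ B \ G', ENNReal.ofReal |g n| ≤ ((1:ℕ) : ℝ≥0∞) * rho g 0 := by
    refine tsum_le_of_bound Finset.sdiff_disjoint hG'
      (fun m hm => rho_bound _ m (by omega)) ?_
    calc (B \ G').card ≤ B.card := Finset.card_le_card Finset.sdiff_subset
      _ ≤ 1 * G'.card := by omega
  refine (main_est f g sf sg B G G').trans ?_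
  refine (add_le_add (add_le_add (add_le_add (add_le_add (add_le_add (add_le_add t1 t2) t3) t4) t5) t6) t7).trans ?_
  push_cast
  ring_nf
  rfl
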